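/- Let n and ℓ be positive integers with n ≤ 2ℓ−2 if n is even and n ≤ 2ℓ−1 if n is odd. Then the antisymmetric integer matrix A_{n,ℓ} is equivalent to the block-diagonal matrix D_{2ℓ}(1, …, 1, n) consisting of ℓ−1 blocks K₁ followed by one block K_n. -/

import Mathlib

open Matrix

/-- Entry of the antisymmetric matrix `S_N` whose entries above the diagonal are all `1`
(indices are 0-based naturals). -/
def SmatE (p q : ℕ) : ℤ := if p < q then 1 else if q < p then -1 else 0

/-- The vector `v_{n,ℓ} ∈ ℤ^{2ℓ-1}` (0-based index `p`; the paper's 1-based index is `p+1`). -/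
def vvecE (n ℓ p : ℕ) : ℤ :=
  if p < n then (-1) ^ p
  else if p = 2 * ℓ - 2 ∧ Even n then 0
  else 1

/-- Entry of the 2ℓ×2ℓ block matrix `A_{n,ℓ} = [[S_{2ℓ-1}, v_{n,ℓ}], [-v_{n,ℓ}ᵀ, 0]]`
(0-based indices). -/
def AmatE (n ℓ p q : ℕ) : ℤ :=
  if p < 2 * ℓ - 1 then
    (if q < 2 * ℓ - 1 then SmatE p q else vvecE n ℓ p)
  else
    (if q < 2 * ℓ - 1 then -(vvecE n ℓ q) else 0)

/-- The antisymmetric 2ℓ×2ℓ integer matrix `A_{n,ℓ}`. -/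
def Amat (n ℓ : ℕ) : Matrix (Fin (2 * ℓ)) (Fin (2 * ℓ)) ℤ :=
  Matrix.of fun i j => AmatE n ℓ (i : ℕ) (j : ℕ)

/-- The block-diagonal antisymmetric N×N matrix `D_N(n₁, …, n_k)` whose first diagonal
2×2 blocks are `K_{n₁}, …, K_{n_k}` (with `K_s = [[0,s],[-s,0]]`) and whose remaining
entries vanish. -/
def Dmat (N : ℕ) (ns : List ℤ) : Matrix (Fin N) (Fin N) ℤ :=
  Matrix.of fun i j =>
    if (j : ℕ) = (i : ℕ) + 1 ∧ (i : ℕ) % 2 = 0 then ns.getD ((i : ℕ) / 2) 0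
    else if (i : ℕ) = (j : ℕ) + 1 ∧ (j : ℕ) % 2 = 0 then -(ns.getD ((j : ℕ) / 2) 0)
    else 0

/-- Two integer matrices are equivalent if `B = T * A * Tᵀ` for some `T ∈ GL(N, ℤ)`. -/
def MatEquiv {n : Type*} [Fintype n] [DecidableEq n] (A B : Matrix n n ℤ) : Prop :=
  ∃ T : Matrix n n ℤ, IsUnit T.det ∧ B = T * A * Tᵀ

/-- `A_{n,ℓ}` is equivalent to `D_{2ℓ}(1, …, 1, n)` with `ℓ-1` blocks `K₁`
followed by one block `K_n`. -/
-- auxiliary definitions and lemmas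

def dvE (n ℓ r : ℕ) : ℤ :=
  if r = 2*ℓ-2 then vvecE n ℓ r else vvecE n ℓ r - vvecE n ℓ (r+1)

def WvE (n ℓ : ℕ) : ℕ → ℤ
  | 0 => dvE n ℓ 0
  | 1 => dvE n ℓ 0
  | (i+2) => WvE n ℓ i + dvE n ℓ (i+2)

def colW (n ℓ i : ℕ) : ℤ := if i % 2 = 0 then WvE n ℓ i else dvE n ℓ i

def TtE (ℓ r j : ℕ) : ℤ := if j = r then 1 else if j = r+1 ∧ r < 2*ℓ-2 then -1 else 0

def QE (ℓ i j : ℕ) : ℤ := if j = i then 1 else if i % 2 = 0 ∧ j + 2 = i then -1 else 0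

def qE (n ℓ k : ℕ) : ℤ := if k % 2 = 0 then dvE n ℓ (k+1) else -WvE n ℓ (k-1)

def T1E (n ℓ i j : ℕ) : ℤ := if i = j then 1 else if i = 2*ℓ-1 ∧ j < 2*ℓ-2 then qE n ℓ j else 0

def B1E (n ℓ i j : ℕ) : ℤ :=
  if j = i+1 ∧ j ≤ 2*ℓ-2 then 1
  else if i = j+1 ∧ i ≤ 2*ℓ-2 then -1
  else if j = 2*ℓ-1 ∧ i < 2*ℓ-1 then dvE n ℓ i
  else if i = 2*ℓ-1 ∧ j < 2*ℓ-1 then -(dvE n ℓ j)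
  else 0

def BE (n ℓ i j : ℕ) : ℤ :=
  if j = i+1 ∧ i % 2 = 0 ∧ j ≤ 2*ℓ-2 then 1
  else if i = j+1 ∧ j % 2 = 0 ∧ i ≤ 2*ℓ-2 then -1
  else if j = 2*ℓ-1 ∧ i < 2*ℓ-1 then colW n ℓ i
  else if i = 2*ℓ-1 ∧ j < 2*ℓ-1 then -(colW n ℓ j)
  else 0

def C1E (n ℓ i j : ℕ) : ℤ := AmatE n ℓ i j - (if i < 2*ℓ-2 then AmatE n ℓ (i+1) j else 0)

def C2E (n ℓ i j : ℕ) : ℤ := BE n ℓ i j - (if i % 2 = 0 ∧ 2 ≤ i then BE n ℓ (i-2) j else 0)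

def C3E (n ℓ i j : ℕ) : ℤ :=
  if i = 2*ℓ-1 ∧ j = 2*ℓ-2 then -(n:ℤ) else if i = 2*ℓ-1 then 0 else BE n ℓ i j

-- helper sum lemmas
lemma sum_spike (N c : ℕ) (f : ℕ → ℤ) :
    (∑ k ∈ Finset.range N, if k = c then f k else 0) = if c < N then f c else 0 := by
  rw [Finset.sum_ite_eq' (Finset.range N) c f]
  simp

lemma sum_range_if_lt (N m : ℕ) (hm : m ≤ N) (f : ℕ → ℤ) :
    (∑ k ∈ Finset.range N, if k < m then f k else 0) = ∑ k ∈ Finset.range m, f k := by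
  have h0 : ∀ x ∈ Finset.range N, x ∉ Finset.range m → (if x < m then f x else 0) = 0 := by
    intro x _ hx
    rw [if_neg]
    simpa [Finset.mem_range] using hx
  rw [← Finset.sum_subset (Finset.range_subset_range.2 hm) h0]
  exact Finset.sum_congr rfl fun k hk => if_pos (Finset.mem_range.1 hk)

lemma sum_pair (m : ℕ) (f : ℕ → ℤ) :
    ∑ k ∈ Finset.range (2*m), f k = ∑ t ∈ Finset.range m, (f (2*t) + f (2*t+1)) := by
  induction m with
  | zero => simp
  | succ m ih =>
      have h2 : 2*(m+1) = (2*m+1)+1 := by ring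
      rw [h2, Finset.sum_range_succ, Finset.sum_range_succ, ih, Finset.sum_range_succ]
      ring

lemma of_mul_of {N : ℕ} (f g : ℕ → ℕ → ℤ) (i j : Fin N) :
    ((Matrix.of fun i j : Fin N => f i j) * (Matrix.of fun i j : Fin N => g i j)) i j
      = ∑ k ∈ Finset.range N, f i k * g k j := by
  rw [Matrix.mul_apply]
  exact Fin.sum_univ_eq_sum_range (fun k => f i k * g k j) N

lemma of_mul_ofT {N : ℕ} (f g : ℕ → ℕ → ℤ) (i j : Fin N) :
    ((Matrix.of fun i j : Fin N => f i j) * (Matrix.of fun i j : Fin N => g i j)ᵀ) i j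
      = ∑ k ∈ Finset.range N, f i k * g j k := by
  rw [Matrix.mul_apply]
  exact Fin.sum_univ_eq_sum_range (fun k => f i k * g j k) N

lemma path_id (i j : ℕ) :
    (SmatE i j - SmatE (i+1) j) - (SmatE i (j+1) - SmatE (i+1) (j+1))
      = if j = i+1 then 1 else if i = j+1 then -1 else 0 := by
  unfold SmatE
  split_ifs <;> omega

lemma AmatE_S (n ℓ p q : ℕ) (hp : p < 2*ℓ-1) (hq : q < 2*ℓ-1) :
    AmatE n ℓ p q = SmatE p q := by
  unfold AmatE; rw [if_pos hp, if_pos hq]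

lemma AmatE_v (n ℓ p q : ℕ) (hp : p < 2*ℓ-1) (hq : ¬ q < 2*ℓ-1) :
    AmatE n ℓ p q = vvecE n ℓ p := by
  unfold AmatE; rw [if_pos hp, if_neg hq]

lemma AmatE_v' (n ℓ p q : ℕ) (hp : ¬ p < 2*ℓ-1) (hq : q < 2*ℓ-1) :
    AmatE n ℓ p q = -(vvecE n ℓ q) := by
  unfold AmatE; rw [if_neg hp, if_pos hq]

lemma AmatE_z (n ℓ p q : ℕ) (hp : ¬ p < 2*ℓ-1) (hq : ¬ q < 2*ℓ-1) :
    AmatE n ℓ p q = 0 := by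
  unfold AmatE; rw [if_neg hp, if_neg hq]

lemma B1_entry (n ℓ i j : ℕ) (hi : i < 2*ℓ) (hj : j < 2*ℓ) :
    C1E n ℓ i j - (if j < 2*ℓ-2 then C1E n ℓ i (j+1) else 0) = B1E n ℓ i j := by
  have hij : i < 2*ℓ-2 ∨ i = 2*ℓ-2 ∨ i = 2*ℓ-1 := by omega
  have hjj : j < 2*ℓ-2 ∨ j = 2*ℓ-2 ∨ j = 2*ℓ-1 := by omega
  unfold C1E
  rcases hij with hi1 | hi1 | hi1 <;> rcases hjj with hj1 | hj1 | hj1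
  · rw [AmatE_S n ℓ i j (by omega) (by omega), AmatE_S n ℓ (i+1) j (by omega) (by omega),
        AmatE_S n ℓ i (j+1) (by omega) (by omega), AmatE_S n ℓ (i+1) (j+1) (by omega) (by omega),
        if_pos hi1, if_pos hi1, if_pos hj1, path_id]
    unfold B1E
    split_ifs <;> omega
  · subst hj1
    rw [AmatE_S n ℓ i (2*ℓ-2) (by omega) (by omega), AmatE_S n ℓ (i+1) (2*ℓ-2) (by omega) (by omega),
        if_pos hi1, if_neg (by omega : ¬(2*ℓ-2 < 2*ℓ-2))]
    unfold SmatE B1E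
    split_ifs <;> omega
  · subst hj1
    rw [AmatE_v n ℓ i (2*ℓ-1) (by omega) (by omega), AmatE_v n ℓ (i+1) (2*ℓ-1) (by omega) (by omega),
        if_pos hi1, if_neg (by omega : ¬(2*ℓ-1 < 2*ℓ-2))]
    unfold B1E dvE
    split_ifs <;> first | ring1 | (exfalso; omega)
  · subst hi1
    rw [AmatE_S n ℓ (2*ℓ-2) j (by omega) (by omega), AmatE_S n ℓ (2*ℓ-2) (j+1) (by omega) (by omega),
        if_neg (by omega : ¬(2*ℓ-2 < 2*ℓ-2)), if_neg (by omega : ¬(2*ℓ-2 < 2*ℓ-2)), if_pos hj1]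
    unfold SmatE B1E
    split_ifs <;> omega
  · subst hi1; subst hj1
    rw [AmatE_S n ℓ (2*ℓ-2) (2*ℓ-2) (by omega) (by omega),
        if_neg (by omega : ¬(2*ℓ-2 < 2*ℓ-2)), if_neg (by omega : ¬(2*ℓ-2 < 2*ℓ-2))]
    unfold SmatE B1E
    split_ifs <;> omega
  · subst hi1; subst hj1
    rw [AmatE_v n ℓ (2*ℓ-2) (2*ℓ-1) (by omega) (by omega),
        if_neg (by omega : ¬(2*ℓ-2 < 2*ℓ-2)), if_neg (by omega : ¬(2*ℓ-1 < 2*ℓ-2))]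
    unfold B1E dvE
    split_ifs <;> first | ring1 | (exfalso; omega)
  · subst hi1
    rw [AmatE_v' n ℓ (2*ℓ-1) j (by omega) (by omega), AmatE_v' n ℓ (2*ℓ-1) (j+1) (by omega) (by omega),
        if_neg (by omega : ¬(2*ℓ-1 < 2*ℓ-2)), if_neg (by omega : ¬(2*ℓ-1 < 2*ℓ-2)), if_pos hj1]
    unfold B1E dvE
    split_ifs <;> first | ring1 | (exfalso; omega)
  · subst hi1; subst hj1
    rw [AmatE_v' n ℓ (2*ℓ-1) (2*ℓ-2) (by omega) (by omega),
        if_neg (by omega : ¬(2*ℓ-1 < 2*ℓ-2)), if_neg (by omega : ¬(2*ℓ-2 < 2*ℓ-2))]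
    unfold B1E dvE
    split_ifs <;> first | ring1 | (exfalso; omega)
  · subst hi1; subst hj1
    rw [AmatE_z n ℓ (2*ℓ-1) (2*ℓ-1) (by omega) (by omega),
        if_neg (by omega : ¬(2*ℓ-1 < 2*ℓ-2)), if_neg (by omega : ¬(2*ℓ-1 < 2*ℓ-2))]
    unfold B1E
    split_ifs <;> first | ring1 | (exfalso; omega)

def TtM (ℓ : ℕ) : Matrix (Fin (2*ℓ)) (Fin (2*ℓ)) ℤ := Matrix.of fun i j => TtE ℓ i j
def B1M (n ℓ : ℕ) : Matrix (Fin (2*ℓ)) (Fin (2*ℓ)) ℤ := Matrix.of fun i j => B1E n ℓ i j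

lemma TtE_split (ℓ r k : ℕ) : TtE ℓ r k =
    (if k = r then 1 else 0) + (if k = r+1 then (if r < 2*ℓ-2 then -1 else 0) else 0) := by
  unfold TtE; split_ifs <;> first | ring1 | (exfalso; omega)

lemma L1 (n ℓ : ℕ) : TtM ℓ * Amat n ℓ = Matrix.of fun i j : Fin (2*ℓ) => C1E n ℓ i j := by
  ext i j
  show (TtM ℓ * Amat n ℓ) i j = C1E n ℓ i j
  rw [show TtM ℓ * Amat n ℓ = (Matrix.of fun i j : Fin (2*ℓ) => TtE ℓ i j) *
      (Matrix.of fun i j : Fin (2*ℓ) => AmatE n ℓ i j) from rfl, of_mul_of]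
  have hsp : ∀ k ∈ Finset.range (2*ℓ), TtE ℓ (i:ℕ) k * AmatE n ℓ k (j:ℕ) =
      (if k = (i:ℕ) then AmatE n ℓ k j else 0) +
      (if k = (i:ℕ)+1 then (if (i:ℕ) < 2*ℓ-2 then -AmatE n ℓ k j else 0) else 0) := by
    intro k _
    rw [TtE_split]
    split_ifs <;> first | ring1 | (exfalso; omega)
  rw [Finset.sum_congr rfl hsp, Finset.sum_add_distrib, sum_spike, sum_spike]
  have hi := i.isLt
  unfold C1E
  split_ifs <;> first | ring1 | (exfalso; omega)

lemma L2 (n ℓ : ℕ) :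
    (Matrix.of fun i j : Fin (2*ℓ) => C1E n ℓ i j) * (TtM ℓ)ᵀ = B1M n ℓ := by
  ext i j
  show _ = B1E n ℓ i j
  rw [show (TtM ℓ) = (Matrix.of fun i j : Fin (2*ℓ) => TtE ℓ i j) from rfl, of_mul_ofT]
  have hsp : ∀ k ∈ Finset.range (2*ℓ), C1E n ℓ (i:ℕ) k * TtE ℓ (j:ℕ) k =
      (if k = (j:ℕ) then C1E n ℓ i k else 0) +
      (if k = (j:ℕ)+1 then (if (j:ℕ) < 2*ℓ-2 then -C1E n ℓ i k else 0) else 0) := by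
    intro k _
    rw [TtE_split]
    split_ifs <;> first | ring1 | (exfalso; omega)
  rw [Finset.sum_congr rfl hsp, Finset.sum_add_distrib, sum_spike, sum_spike]
  have hi := i.isLt
  have hj := j.isLt
  rw [← B1_entry n ℓ i j hi hj]
  split_ifs <;> first | ring1 | (exfalso; omega)

def QM (ℓ : ℕ) : Matrix (Fin (2*ℓ)) (Fin (2*ℓ)) ℤ := Matrix.of fun i j => QE ℓ i j
def B2M (n ℓ : ℕ) : Matrix (Fin (2*ℓ)) (Fin (2*ℓ)) ℤ := Matrix.of fun i j => BE n ℓ i j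

lemma WvE_step (n ℓ k : ℕ) : WvE n ℓ (k+2) = WvE n ℓ k + dvE n ℓ (k+2) := rfl

lemma colW_diff (n ℓ i : ℕ) :
    colW n ℓ i - (if i % 2 = 0 ∧ 2 ≤ i then colW n ℓ (i-2) else 0) = dvE n ℓ i := by
  by_cases hp : i % 2 = 0
  · by_cases h2 : 2 ≤ i
    · obtain ⟨k, rfl⟩ : ∃ k, i = k+2 := ⟨i-2, by omega⟩
      rw [if_pos ⟨hp, h2⟩, show k+2-2 = k from by omega]
      unfold colW
      rw [if_pos hp, if_pos (by omega : k % 2 = 0), WvE_step]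
      ring
    · rw [if_neg (by omega), show i = 0 from by omega]
      show WvE n ℓ 0 - 0 = dvE n ℓ 0
      rw [show WvE n ℓ 0 = dvE n ℓ 0 from rfl]
      ring
  · rw [if_neg (by tauto)]
    unfold colW
    rw [if_neg hp]
    ring

lemma C2E_last (n ℓ j : ℕ) (hl : 1 ≤ ℓ) (hj : j < 2*ℓ-1) :
    C2E n ℓ (2*ℓ-1) j = -(colW n ℓ j) := by
  unfold C2E BE
  rw [if_neg (by omega), if_neg (by omega), if_neg (by omega), if_pos (by omega), if_neg (by omega)]
  ring

lemma BE_lastcol (n ℓ i : ℕ) (hl : 1 ≤ ℓ) (hi : i < 2*ℓ-1) :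
    BE n ℓ i (2*ℓ-1) = colW n ℓ i := by
  unfold BE
  rw [if_neg (by omega), if_neg (by omega), if_pos (by omega)]

lemma BE_small (n ℓ i j : ℕ) (hi : i < 2*ℓ-1) (hj : j < 2*ℓ-1) :
    BE n ℓ i j = if j = i+1 ∧ i % 2 = 0 then 1 else if i = j+1 ∧ j % 2 = 0 then -1 else 0 := by
  unfold BE
  split_ifs <;> first | ring1 | (exfalso; omega)

lemma B1E_small (n ℓ i j : ℕ) (hi : i < 2*ℓ-1) (hj : j < 2*ℓ-1) :
    B1E n ℓ i j = if j = i+1 then 1 else if i = j+1 then -1 else 0 := by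
  unfold B1E
  split_ifs <;> first | ring1 | (exfalso; omega)

set_option maxHeartbeats 800000 in
lemma B2_to_B1 (n ℓ i j : ℕ) (hi : i < 2*ℓ) (hj : j < 2*ℓ) :
    C2E n ℓ i j - (if j % 2 = 0 ∧ 2 ≤ j then C2E n ℓ i (j-2) else 0) = B1E n ℓ i j := by
  have hl : 1 ≤ ℓ := by omega
  by_cases hi1 : i = 2*ℓ-1 <;> by_cases hj1 : j = 2*ℓ-1
  · -- both last
    subst hi1; subst hj1
    unfold C2E BE B1E
    split_ifs <;> first | ring1 | (exfalso; omega)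
  · -- i last, j < 2ℓ-1
    subst hi1
    have hj2 : j < 2*ℓ-1 := by omega
    rw [C2E_last n ℓ j hl hj2]
    have hB1 : B1E n ℓ (2*ℓ-1) j = -(dvE n ℓ j) := by
      unfold B1E
      rw [if_neg (by omega), if_neg (by omega), if_neg (by omega), if_pos (by omega)]
    rw [hB1, ← colW_diff n ℓ j]
    by_cases hcj : j % 2 = 0 ∧ 2 ≤ j
    · rw [if_pos hcj, if_pos hcj, C2E_last n ℓ (j-2) hl (by omega)]
      ring
    · rw [if_neg hcj, if_neg hcj]
      ring
  · -- j last, i < 2ℓ-1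
    subst hj1
    have hi2 : i < 2*ℓ-1 := by omega
    rw [if_neg (by omega : ¬((2*ℓ-1) % 2 = 0 ∧ 2 ≤ 2*ℓ-1))]
    have hB1 : B1E n ℓ i (2*ℓ-1) = dvE n ℓ i := by
      unfold B1E
      rw [if_neg (by omega), if_neg (by omega), if_pos (by omega)]
    rw [hB1, ← colW_diff n ℓ i]
    unfold C2E
    rw [BE_lastcol n ℓ i hl hi2]
    by_cases hci : i % 2 = 0 ∧ 2 ≤ i
    · rw [if_pos hci, if_pos hci, BE_lastcol n ℓ (i-2) hl (by omega)]
      ring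
    · rw [if_neg hci, if_neg hci]
      ring
  · -- both < 2ℓ-1
    have hi2 : i < 2*ℓ-1 := by omega
    have hj2 : j < 2*ℓ-1 := by omega
    unfold C2E
    rw [BE_small n ℓ i j hi2 hj2, BE_small n ℓ (i-2) j (by omega) hj2,
        BE_small n ℓ i (j-2) hi2 (by omega), BE_small n ℓ (i-2) (j-2) (by omega) (by omega),
        B1E_small n ℓ i j hi2 hj2]
    split_ifs <;> first | ring1 | (exfalso; omega)

lemma QE_split (ℓ i k : ℕ) : QE ℓ i k =
    (if k = i then 1 else 0) + (if k = i-2 then (if i % 2 = 0 ∧ 2 ≤ i then -1 else 0) else 0) := by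
  unfold QE
  split_ifs <;> first | ring1 | (exfalso; omega)

lemma L3 (n ℓ : ℕ) : QM ℓ * B2M n ℓ = Matrix.of fun i j : Fin (2*ℓ) => C2E n ℓ i j := by
  ext i j
  show _ = C2E n ℓ i j
  rw [show QM ℓ * B2M n ℓ = (Matrix.of fun i j : Fin (2*ℓ) => QE ℓ i j) *
      (Matrix.of fun i j : Fin (2*ℓ) => BE n ℓ i j) from rfl, of_mul_of]
  have hsp : ∀ k ∈ Finset.range (2*ℓ), QE ℓ (i:ℕ) k * BE n ℓ k (j:ℕ) =
      (if k = (i:ℕ) then BE n ℓ k j else 0) +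
      (if k = (i:ℕ)-2 then (if (i:ℕ) % 2 = 0 ∧ 2 ≤ (i:ℕ) then -BE n ℓ k j else 0) else 0) := by
    intro k _
    rw [QE_split]
    split_ifs <;> first | ring1 | (exfalso; omega)
  rw [Finset.sum_congr rfl hsp, Finset.sum_add_distrib, sum_spike, sum_spike]
  have hi := i.isLt
  unfold C2E
  split_ifs <;> first | ring1 | (exfalso; omega)

lemma L4 (n ℓ : ℕ) :
    (Matrix.of fun i j : Fin (2*ℓ) => C2E n ℓ i j) * (QM ℓ)ᵀ = B1M n ℓ := by
  ext i j
  show _ = B1E n ℓ i j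
  rw [show QM ℓ = (Matrix.of fun i j : Fin (2*ℓ) => QE ℓ i j) from rfl, of_mul_ofT]
  have hsp : ∀ k ∈ Finset.range (2*ℓ), C2E n ℓ (i:ℕ) k * QE ℓ (j:ℕ) k =
      (if k = (j:ℕ) then C2E n ℓ i k else 0) +
      (if k = (j:ℕ)-2 then (if (j:ℕ) % 2 = 0 ∧ 2 ≤ (j:ℕ) then -C2E n ℓ i k else 0) else 0) := by
    intro k _
    rw [QE_split]
    split_ifs <;> first | ring1 | (exfalso; omega)
  rw [Finset.sum_congr rfl hsp, Finset.sum_add_distrib, sum_spike, sum_spike]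
  have hi := i.isLt
  have hj := j.isLt
  rw [← B2_to_B1 n ℓ i j hi hj]
  split_ifs <;> first | ring1 | (exfalso; omega)

def T1M (n ℓ : ℕ) : Matrix (Fin (2*ℓ)) (Fin (2*ℓ)) ℤ := Matrix.of fun i j => T1E n ℓ i j

lemma sum_single (N c : ℕ) (hc : c < N) (f : ℕ → ℤ) (h : ∀ k, k < N → k ≠ c → f k = 0) :
    ∑ k ∈ Finset.range N, f k = f c :=
  Finset.sum_eq_single_of_mem c (Finset.mem_range.2 hc)
    (fun b hb hbc => h b (Finset.mem_range.1 hb) hbc)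

lemma WvE_sum (n ℓ m : ℕ) : WvE n ℓ (2*m) = ∑ t ∈ Finset.range (m+1), dvE n ℓ (2*t) := by
  induction m with
  | zero => norm_num [WvE]
  | succ m ih =>
      rw [show 2*(m+1) = (2*m)+2 from by ring, WvE_step, ih,
          Finset.sum_range_succ (fun t => dvE n ℓ (2*t)) (m+1)]
      norm_num [show 2*(m+1) = 2*m+2 from by ring]

lemma dvE_val (n ℓ t : ℕ) (ht : t < ℓ-1) :
    dvE n ℓ (2*t) = if 2*t+1 < n then 2 else 0 := by
  have h1 : ((-1:ℤ))^(2*t) = 1 := by rw [pow_mul]; norm_num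
  have h2 : ((-1:ℤ))^(2*t+1) = -1 := by rw [pow_succ, h1]; norm_num
  unfold dvE vvecE
  simp only [Nat.even_iff]
  split_ifs <;> first | (exfalso; omega) | ring1 | (rw [h1, h2]; try ring1) | (rw [h1]; try ring1)

lemma dvE_last (n ℓ : ℕ) (hn : 0 < n) (hl : 1 ≤ ℓ) (he : n % 2 = 0 → n + 2 ≤ 2*ℓ)
    (ho : n % 2 = 1 → n + 1 ≤ 2*ℓ) :
    dvE n ℓ (2*(ℓ-1)) = if n % 2 = 0 then 0 else 1 := by
  have h1 : ((-1:ℤ))^(2*(ℓ-1)) = 1 := by rw [pow_mul]; norm_num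
  unfold dvE vvecE
  simp only [Nat.even_iff]
  split_ifs <;> first | (exfalso; omega) | ring1 | (rw [h1]; try ring1)

lemma Wkey (n ℓ : ℕ) (hn : 0 < n) (hl : 1 ≤ ℓ) (he : n % 2 = 0 → n + 2 ≤ 2*ℓ)
    (ho : n % 2 = 1 → n + 1 ≤ 2*ℓ) :
    WvE n ℓ (2*ℓ-2) = (n : ℤ) := by
  rw [show 2*ℓ-2 = 2*(ℓ-1) from by omega, WvE_sum, Finset.sum_range_succ]
  rw [Finset.sum_congr rfl (fun t ht => dvE_val n ℓ t (Finset.mem_range.1 ht)),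
      dvE_last n ℓ hn hl he ho]
  rw [Finset.sum_congr rfl (fun t _ => if_congr (by omega : (2*t+1 < n) ↔ (t < n/2)) rfl rfl)]
  rw [sum_range_if_lt (ℓ-1) (n/2) (by omega) (fun _ => 2), Finset.sum_const, Finset.card_range]
  by_cases hp : n % 2 = 0 <;> simp only [hp, if_pos, if_neg] <;> simp <;> omega

lemma T1E_split (n ℓ i k : ℕ) : T1E n ℓ i k =
    (if k = i then 1 else 0) + (if k < 2*ℓ-2 then (if i = 2*ℓ-1 then qE n ℓ k else 0) else 0) := by
  unfold T1E
  split_ifs <;> first | ring1 | (exfalso; omega)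

lemma BE_last_row (n ℓ j : ℕ) (hl : 1 ≤ ℓ) (hj : j < 2*ℓ-1) :
    BE n ℓ (2*ℓ-1) j = -(colW n ℓ j) := by
  unfold BE
  rw [if_neg (by omega), if_neg (by omega), if_neg (by omega), if_pos (by omega)]

lemma L5 (n ℓ : ℕ) (hn : 0 < n) (hl : 1 ≤ ℓ) (he : n % 2 = 0 → n + 2 ≤ 2*ℓ)
    (ho : n % 2 = 1 → n + 1 ≤ 2*ℓ) :
    T1M n ℓ * B2M n ℓ = Matrix.of fun i j : Fin (2*ℓ) => C3E n ℓ i j := by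
  ext i j
  show _ = C3E n ℓ i j
  rw [show T1M n ℓ * B2M n ℓ = (Matrix.of fun i j : Fin (2*ℓ) => T1E n ℓ i j) *
      (Matrix.of fun i j : Fin (2*ℓ) => BE n ℓ i j) from rfl, of_mul_of]
  have hsp : ∀ k ∈ Finset.range (2*ℓ), T1E n ℓ (i:ℕ) k * BE n ℓ k (j:ℕ) =
      (if k = (i:ℕ) then BE n ℓ k j else 0) +
      (if k < 2*ℓ-2 then (if (i:ℕ) = 2*ℓ-1 then qE n ℓ k * BE n ℓ k j else 0) else 0) := by
    intro k _
    rw [T1E_split]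
    split_ifs <;> first | ring1 | (exfalso; omega)
  rw [Finset.sum_congr rfl hsp, Finset.sum_add_distrib, sum_spike,
      sum_range_if_lt (2*ℓ) (2*ℓ-2) (by omega), if_pos i.isLt]
  by_cases hi1 : (i:ℕ) = 2*ℓ-1
  · rw [Finset.sum_congr rfl (fun k _ => if_pos hi1), hi1]
    have hj2 := j.isLt
    have hjj : ((j:ℕ) < 2*ℓ-2 ∧ (j:ℕ) % 2 = 0) ∨ ((j:ℕ) < 2*ℓ-2 ∧ (j:ℕ) % 2 = 1) ∨
        (j:ℕ) = 2*ℓ-2 ∨ (j:ℕ) = 2*ℓ-1 := by omega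
    rcases hjj with ⟨hje, hjp⟩ | ⟨hje, hjp⟩ | hje | hje
    · -- j even < 2ℓ-2 : spike at j+1
      rw [sum_single (2*ℓ-2) ((j:ℕ)+1) (by omega) _ (by
        intro k hk hk2
        have hb0 : BE n ℓ k (j:ℕ) = 0 := by
          unfold BE; split_ifs <;> first | rfl | (exfalso; omega)
        rw [hb0]; ring)]
      have hq : qE n ℓ ((j:ℕ)+1) = -WvE n ℓ (j:ℕ) := by
        unfold qE; rw [if_neg (by omega)]; norm_num
      have hb : BE n ℓ ((j:ℕ)+1) (j:ℕ) = -1 := by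
        unfold BE; rw [if_neg (by omega), if_pos (by omega)]
      rw [hq, hb, BE_last_row n ℓ (j:ℕ) hl (by omega)]
      unfold colW C3E
      rw [if_pos hjp, if_neg (by omega), if_pos rfl]
      ring
    · -- j odd < 2ℓ-2 : spike at j-1
      rw [sum_single (2*ℓ-2) ((j:ℕ)-1) (by omega) _ (by
        intro k hk hk2
        have hb0 : BE n ℓ k (j:ℕ) = 0 := by
          unfold BE; split_ifs <;> first | rfl | (exfalso; omega)
        rw [hb0]; ring)]
      have hq : qE n ℓ ((j:ℕ)-1) = dvE n ℓ (j:ℕ) := by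
        unfold qE; rw [if_pos (by omega), show (j:ℕ)-1+1 = (j:ℕ) from by omega]
      have hb : BE n ℓ ((j:ℕ)-1) (j:ℕ) = 1 := by
        unfold BE; rw [if_pos (by omega)]
      rw [hq, hb, BE_last_row n ℓ (j:ℕ) hl (by omega)]
      unfold colW C3E
      rw [if_neg (by omega), if_neg (by omega), if_pos rfl]
      ring
    · -- j = 2ℓ-2
      rw [hje]
      rw [Finset.sum_eq_zero (fun k hk => by
        have hk2 := Finset.mem_range.1 hk
        have hb0 : BE n ℓ k (2*ℓ-2) = 0 := by
          unfold BE; split_ifs <;> first | rfl | (exfalso; omega)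
        rw [hb0]; ring)]
      rw [BE_last_row n ℓ (2*ℓ-2) hl (by omega)]
      unfold colW C3E
      rw [if_pos (by omega), if_pos (by omega), Wkey n ℓ hn hl he ho]
      ring
    · -- j = 2ℓ-1
      rw [hje]
      rw [Finset.sum_congr rfl (fun k hk => by
        rw [BE_lastcol n ℓ k hl (by have := Finset.mem_range.1 hk; omega)])]
      rw [show 2*ℓ-2 = 2*(ℓ-1) from by omega, sum_pair]
      rw [Finset.sum_eq_zero (fun t _ => by
        unfold qE colW
        rw [if_pos (by omega : (2*t) % 2 = 0), if_pos (by omega : (2*t) % 2 = 0),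
            if_neg (by omega : ¬((2*t+1) % 2 = 0)), if_neg (by omega : ¬((2*t+1) % 2 = 0)),
            show 2*t+1-1 = 2*t from by omega]
        ring)]
      have hbe : BE n ℓ (2*ℓ-1) (2*ℓ-1) = 0 := by
        unfold BE; split_ifs <;> first | rfl | (exfalso; omega)
      rw [hbe]
      unfold C3E
      rw [if_neg (by omega), if_pos rfl]
      ring
  · rw [Finset.sum_eq_zero (fun k _ => if_neg hi1)]
    unfold C3E
    rw [if_neg (by omega), if_neg hi1]
    ring

lemma getD_rep (m : ℕ) (x : ℤ) (t : ℕ) :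
    (List.replicate m (1:ℤ) ++ [x]).getD t 0 = if t < m then 1 else if t = m then x else 0 := by
  rcases lt_trichotomy t m with h|h|h
  · rw [List.getD_append _ _ _ _ (by simpa using h), if_pos h,
        List.getD_eq_getElem _ _ (by simpa using h), List.getElem_replicate]
  · subst h
    rw [List.getD_append_right _ _ _ _ (by simp), if_neg (lt_irrefl t), if_pos rfl]
    simp
  · rw [List.getD_eq_default _ _ (by simp; omega), if_neg (by omega), if_neg (by omega)]

lemma L6 (n ℓ : ℕ) (hn : 0 < n) (hl : 1 ≤ ℓ) (he : n % 2 = 0 → n + 2 ≤ 2*ℓ)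
    (ho : n % 2 = 1 → n + 1 ≤ 2*ℓ) :
    (Matrix.of fun i j : Fin (2*ℓ) => C3E n ℓ i j) * (T1M n ℓ)ᵀ
      = Dmat (2*ℓ) (List.replicate (ℓ-1) (1:ℤ) ++ [(n:ℤ)]) := by
  ext i j
  rw [show T1M n ℓ = (Matrix.of fun i j : Fin (2*ℓ) => T1E n ℓ i j) from rfl, of_mul_ofT]
  show _ = (if (j:ℕ) = (i:ℕ) + 1 ∧ (i:ℕ) % 2 = 0
      then (List.replicate (ℓ-1) (1:ℤ) ++ [(n:ℤ)]).getD ((i:ℕ) / 2) 0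
      else if (i:ℕ) = (j:ℕ) + 1 ∧ (j:ℕ) % 2 = 0
      then -((List.replicate (ℓ-1) (1:ℤ) ++ [(n:ℤ)]).getD ((j:ℕ) / 2) 0)
      else 0)
  rw [getD_rep, getD_rep]
  have hsp : ∀ k ∈ Finset.range (2*ℓ), C3E n ℓ (i:ℕ) k * T1E n ℓ (j:ℕ) k =
      (if k = (j:ℕ) then C3E n ℓ i k else 0) +
      (if k < 2*ℓ-2 then (if (j:ℕ) = 2*ℓ-1 then C3E n ℓ i k * qE n ℓ k else 0) else 0) := by
    intro k _
    rw [T1E_split]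
    split_ifs <;> first | ring1 | (exfalso; omega)
  rw [Finset.sum_congr rfl hsp, Finset.sum_add_distrib, sum_spike,
      sum_range_if_lt (2*ℓ) (2*ℓ-2) (by omega), if_pos j.isLt]
  have hi2 := i.isLt
  have hj2 := j.isLt
  by_cases hj1 : (j:ℕ) = 2*ℓ-1
  · rw [Finset.sum_congr rfl (fun k _ => if_pos hj1), hj1]
    have hii : ((i:ℕ) < 2*ℓ-2 ∧ (i:ℕ) % 2 = 0) ∨ ((i:ℕ) < 2*ℓ-2 ∧ (i:ℕ) % 2 = 1) ∨
        (i:ℕ) = 2*ℓ-2 ∨ (i:ℕ) = 2*ℓ-1 := by omega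
    have hC : (i:ℕ) ≠ 2*ℓ-1 → ∀ k, C3E n ℓ (i:ℕ) k = BE n ℓ (i:ℕ) k := by
      intro hne k
      unfold C3E; rw [if_neg (by omega), if_neg hne]
    rcases hii with ⟨hie, hip⟩ | ⟨hie, hip⟩ | hie | hie
    · -- i even < 2ℓ-2 : spike at i+1
      rw [sum_single (2*ℓ-2) ((i:ℕ)+1) (by omega) _ (by
        intro k hk hk2
        rw [hC (by omega) k]
        have hb0 : BE n ℓ (i:ℕ) k = 0 := by
          unfold BE; split_ifs <;> first | rfl | (exfalso; omega)
        rw [hb0]; ring)]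
      have hq : qE n ℓ ((i:ℕ)+1) = -WvE n ℓ (i:ℕ) := by
        unfold qE; rw [if_neg (by omega)]; norm_num
      have hb : BE n ℓ (i:ℕ) ((i:ℕ)+1) = 1 := by
        unfold BE; rw [if_pos (by omega)]
      simp only [hC (by omega : (i:ℕ) ≠ 2*ℓ-1)]
      rw [hq, hb, BE_lastcol n ℓ (i:ℕ) hl (by omega)]
      unfold colW
      rw [if_pos hip, if_neg (by omega), if_neg (by omega)]
      ring
    · -- i odd < 2ℓ-2 : spike at i-1
      rw [sum_single (2*ℓ-2) ((i:ℕ)-1) (by omega) _ (by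
        intro k hk hk2
        rw [hC (by omega) k]
        have hb0 : BE n ℓ (i:ℕ) k = 0 := by
          unfold BE; split_ifs <;> first | rfl | (exfalso; omega)
        rw [hb0]; ring)]
      have hq : qE n ℓ ((i:ℕ)-1) = dvE n ℓ (i:ℕ) := by
        unfold qE; rw [if_pos (by omega), show (i:ℕ)-1+1 = (i:ℕ) from by omega]
      have hb : BE n ℓ (i:ℕ) ((i:ℕ)-1) = -1 := by
        unfold BE; rw [if_neg (by omega), if_pos (by omega)]
      simp only [hC (by omega : (i:ℕ) ≠ 2*ℓ-1)]
      rw [hq, hb, BE_lastcol n ℓ (i:ℕ) hl (by omega)]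
      unfold colW
      rw [if_neg (by omega), if_neg (by omega), if_neg (by omega)]
      ring
    · -- i = 2ℓ-2
      rw [Finset.sum_eq_zero (fun k hk => by
        have hk2 := Finset.mem_range.1 hk
        rw [hC (by omega) k]
        have hb0 : BE n ℓ (i:ℕ) k = 0 := by
          unfold BE; split_ifs <;> first | rfl | (exfalso; omega)
        rw [hb0]; ring)]
      simp only [hC (by omega : (i:ℕ) ≠ 2*ℓ-1)]
      rw [BE_lastcol n ℓ (i:ℕ) hl (by omega)]
      unfold colW
      rw [if_pos (by omega), hie, Wkey n ℓ hn hl he ho,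
          if_pos (by omega : 2*ℓ-1 = (2*ℓ-2) + 1 ∧ (2*ℓ-2) % 2 = 0),
          if_neg (by omega : ¬((2*ℓ-2)/2 < ℓ-1)), if_pos (by omega : (2*ℓ-2)/2 = ℓ-1)]
      ring
    · -- i = 2ℓ-1
      rw [hie]
      rw [Finset.sum_eq_zero (fun k hk => by
        have hk2 := Finset.mem_range.1 hk
        have hb0 : C3E n ℓ (2*ℓ-1) k = 0 := by
          unfold C3E; rw [if_neg (by omega), if_pos rfl]
        rw [hb0]; ring)]
      have hb0 : C3E n ℓ (2*ℓ-1) (2*ℓ-1) = 0 := by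
        unfold C3E; rw [if_neg (by omega), if_pos rfl]
      rw [hb0, if_neg (by omega), if_neg (by omega)]
      ring
  · rw [Finset.sum_eq_zero (fun k _ => if_neg hj1)]
    by_cases hi1 : (i:ℕ) = 2*ℓ-1
    · rw [hi1]
      by_cases hj3 : (j:ℕ) = 2*ℓ-2
      · rw [hj3]
        unfold C3E
        rw [if_pos (by omega : 2*ℓ-1 = 2*ℓ-1 ∧ 2*ℓ-2 = 2*ℓ-2),
            if_neg (by omega : ¬(2*ℓ-2 = 2*ℓ-1+1 ∧ (2*ℓ-1) % 2 = 0)),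
            if_pos (by omega : 2*ℓ-1 = (2*ℓ-2)+1 ∧ (2*ℓ-2) % 2 = 0),
            if_neg (by omega : ¬((2*ℓ-2)/2 < ℓ-1)), if_pos (by omega : (2*ℓ-2)/2 = ℓ-1)]
        ring
      · unfold C3E
        rw [if_neg (by omega), if_pos rfl, if_neg (by omega), if_neg (by omega)]
        ring
    · unfold C3E
      rw [if_neg (by omega), if_neg hi1]
      unfold BE
      split_ifs <;> first | ring1 | (exfalso; omega)

lemma det_TtM (ℓ : ℕ) : IsUnit (TtM ℓ).det := by
  have h : (TtM ℓ).det = ∏ i : Fin (2*ℓ), (TtM ℓ) i i := by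
    apply Matrix.det_of_upperTriangular
    intro i j hij
    have hij' : (j:ℕ) < (i:ℕ) := hij
    show TtE ℓ (i:ℕ) (j:ℕ) = 0
    unfold TtE
    rw [if_neg (by omega), if_neg (by omega)]
  rw [h]
  have : ∀ i : Fin (2*ℓ), (TtM ℓ) i i = 1 := by
    intro i; show TtE ℓ (i:ℕ) (i:ℕ) = 1; unfold TtE; rw [if_pos rfl]
  simp [this]

lemma det_QM (ℓ : ℕ) : IsUnit (QM ℓ).det := by
  have h : (QM ℓ).det = ∏ i : Fin (2*ℓ), (QM ℓ) i i := by
    apply Matrix.det_of_lowerTriangular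
    intro i j hij
    have hij' : (i:ℕ) < (j:ℕ) := hij
    show QE ℓ (i:ℕ) (j:ℕ) = 0
    unfold QE
    rw [if_neg (by omega), if_neg (by omega)]
  rw [h]
  have : ∀ i : Fin (2*ℓ), (QM ℓ) i i = 1 := by
    intro i; show QE ℓ (i:ℕ) (i:ℕ) = 1; unfold QE; rw [if_pos rfl]
  simp [this]

lemma det_T1M (n ℓ : ℕ) : IsUnit (T1M n ℓ).det := by
  have h : (T1M n ℓ).det = ∏ i : Fin (2*ℓ), (T1M n ℓ) i i := by
    apply Matrix.det_of_lowerTriangular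
    intro i j hij
    have hij' : (i:ℕ) < (j:ℕ) := hij
    show T1E n ℓ (i:ℕ) (j:ℕ) = 0
    unfold T1E
    rw [if_neg (by omega), if_neg (by omega)]
  rw [h]
  have : ∀ i : Fin (2*ℓ), (T1M n ℓ) i i = 1 := by
    intro i; show T1E n ℓ (i:ℕ) (i:ℕ) = 1; unfold T1E; rw [if_pos rfl]
  simp [this]

lemma matEquiv_trans {N : ℕ} {A B C : Matrix (Fin N) (Fin N) ℤ}
    (h1 : MatEquiv A B) (h2 : MatEquiv B C) : MatEquiv A C := by
  obtain ⟨T, hT, hB⟩ := h1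
  obtain ⟨S, hS, hC⟩ := h2
  refine ⟨S * T, by rw [Matrix.det_mul]; exact hS.mul hT, ?_⟩
  rw [hC, hB, Matrix.transpose_mul]
  simp only [Matrix.mul_assoc]

lemma matEquiv_symm {N : ℕ} {A B : Matrix (Fin N) (Fin N) ℤ}
    (h : MatEquiv A B) : MatEquiv B A := by
  obtain ⟨T, hT, hB⟩ := h
  refine ⟨T⁻¹, by rw [Matrix.det_nonsing_inv, isUnit_ringInverse]; exact hT, ?_⟩
  have h1 : T⁻¹ * T = 1 := Matrix.nonsing_inv_mul T hT
  have h2 : Tᵀ * T⁻¹ᵀ = 1 := by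
    rw [← Matrix.transpose_mul, Matrix.nonsing_inv_mul T hT, Matrix.transpose_one]
  rw [hB]
  calc A = (T⁻¹ * T) * A * (Tᵀ * T⁻¹ᵀ) := by rw [h1, h2, Matrix.one_mul, Matrix.mul_one]
    _ = T⁻¹ * (T * A * Tᵀ) * T⁻¹ᵀ := by simp only [Matrix.mul_assoc]

theorem Amat_equiv_Dmat (n ℓ : ℕ) (hn : 0 < n) (hℓ : 0 < ℓ)
    (heven : Even n → n + 2 ≤ 2 * ℓ) (hodd : ¬Even n → n + 1 ≤ 2 * ℓ) :
    MatEquiv (Amat n ℓ) (Dmat (2 * ℓ) (List.replicate (ℓ - 1) (1 : ℤ) ++ [(n : ℤ)])) := by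
  have hl : 1 ≤ ℓ := hℓ
  have he : n % 2 = 0 → n + 2 ≤ 2*ℓ := fun h => heven (Nat.even_iff.mpr h)
  have ho : n % 2 = 1 → n + 1 ≤ 2*ℓ := fun h =>
    hodd (fun hev => by rw [Nat.even_iff] at hev; omega)
  have e1 : MatEquiv (Amat n ℓ) (B1M n ℓ) :=
    ⟨TtM ℓ, det_TtM ℓ, by rw [L1, L2]⟩
  have e2 : MatEquiv (B2M n ℓ) (B1M n ℓ) :=
    ⟨QM ℓ, det_QM ℓ, by rw [L3, L4]⟩
  have e3 : MatEquiv (B2M n ℓ) (Dmat (2 * ℓ) (List.replicate (ℓ - 1) (1 : ℤ) ++ [(n : ℤ)])) :=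
    ⟨T1M n ℓ, det_T1M n ℓ, by rw [L5 n ℓ hn hl he ho, L6 n ℓ hn hl he ho]⟩
  exact matEquiv_trans (matEquiv_trans e1 (matEquiv_symm e2)) e3
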